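/- For every sufficiently large natural number n, setting k = ⌈3·log₂ n⌉, there exists an n×n Boolean matrix that contains no monochromatic k×k minor. -/

import Mathlib

open Finset

lemma counting_aux {n k : ℕ} (hkn : k ≤ n)
    (h : ∀ M : Fin n → Fin n → Bool,
      ∃ (r c : Fin k → Fin n), Function.Injective r ∧ Function.Injective c ∧
        ∃ b : Bool, ∀ i j, M (r i) (c j) = b) :
    2 ^ (k * k) ≤ 2 * n ^ k * n ^ k := by
  classical
  set A : ((Fin k → Fin n) × (Fin k → Fin n) × Bool) → Finset (Fin n → Fin n → Bool) :=
    fun t => univ.filter fun M => ∀ i j, M (t.1 i) (t.2.1 j) = t.2.2 with hAdef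
  set S : Finset ((Fin k → Fin n) × (Fin k → Fin n) × Bool) :=
    univ.filter fun t => Function.Injective t.1 ∧ Function.Injective t.2.1 with hSdef
  have hcover : (univ : Finset (Fin n → Fin n → Bool)) ⊆ S.biUnion A := by
    intro M _
    obtain ⟨r, c, hr, hc, b, hb⟩ := h M
    refine mem_biUnion.mpr ⟨(r, c, b), ?_, ?_⟩
    · simp [hSdef, hr, hc]
    · simp [hAdef, hb]
  have hAcard : ∀ t ∈ S, (A t).card ≤ 2 ^ (n * n - k * k) := by
    rintro ⟨r, c, b⟩ ht
    simp only [hSdef, mem_filter] at ht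
    obtain ⟨-, hr, hc⟩ := ht
    set R : Finset (Fin n × Fin n) := univ.image (fun p : Fin k × Fin k => (r p.1, c p.2)) with hR
    have hinj : Function.Injective (fun p : Fin k × Fin k => (r p.1, c p.2)) := by
      intro p q hpq
      simp only [Prod.mk.injEq] at hpq
      exact Prod.ext (hr hpq.1) (hc hpq.2)
    have hRcard : R.card = k * k := by
      rw [hR, Finset.card_image_of_injective _ hinj, card_univ]
      simp
    have hle : (A (r, c, b)).card ≤ (univ : Finset ((Rᶜ : Finset (Fin n × Fin n)) → Bool)).card := by
      apply Finset.card_le_card_of_injOn (fun M p => M p.1.1 p.1.2) (fun _ _ => mem_univ _)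
      intro M hM M' hM' hfe
      simp only [hAdef, mem_coe, mem_filter] at hM hM'
      funext x y
      by_cases hxy : (x, y) ∈ R
      · obtain ⟨p, -, hp⟩ := mem_image.mp hxy
        obtain ⟨hp1, hp2⟩ := Prod.mk.injEq .. ▸ hp
        rw [← hp1, ← hp2, hM.2, hM'.2]
      · exact congrFun hfe ⟨(x, y), by simpa using hxy⟩
    have hcardfun : (univ : Finset ((Rᶜ : Finset (Fin n × Fin n)) → Bool)).card
        = 2 ^ (n * n - k * k) := by
      rw [card_univ, Fintype.card_fun, Fintype.card_coe, Finset.card_compl, hRcard]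
      simp [Fintype.card_prod]
    omega
  have hmain : 2 ^ (n * n) ≤ S.card * 2 ^ (n * n - k * k) := by
    calc 2 ^ (n * n) = (univ : Finset (Fin n → Fin n → Bool)).card := by
          rw [card_univ, Fintype.card_fun, Fintype.card_fun]
          simp [pow_mul]
      _ ≤ (S.biUnion A).card := Finset.card_le_card hcover
      _ ≤ ∑ t ∈ S, (A t).card := Finset.card_biUnion_le
      _ ≤ S.card * 2 ^ (n * n - k * k) := by
          simpa using Finset.sum_le_card_nsmul S _ _ hAcard
  have hScard : S.card ≤ n ^ k * n ^ k * 2 := by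
    calc S.card ≤ (univ : Finset ((Fin k → Fin n) × (Fin k → Fin n) × Bool)).card :=
          Finset.card_filter_le _ _
      _ = n ^ k * (n ^ k * 2) := by simp [Fintype.card_fun]
      _ = n ^ k * n ^ k * 2 := by ring
  have hsplit : 2 ^ (n * n) = 2 ^ (k * k) * 2 ^ (n * n - k * k) := by
    rw [← pow_add]
    congr 1
    have : k * k ≤ n * n := Nat.mul_le_mul hkn hkn
    omega
  have hpos : 0 < 2 ^ (n * n - k * k) := Nat.pow_pos (by norm_num)
  have : 2 ^ (k * k) * 2 ^ (n * n - k * k) ≤ (n ^ k * n ^ k * 2) * 2 ^ (n * n - k * k) := by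
    calc 2 ^ (k * k) * 2 ^ (n * n - k * k) = 2 ^ (n * n) := hsplit.symm
      _ ≤ S.card * 2 ^ (n * n - k * k) := hmain
      _ ≤ (n ^ k * n ^ k * 2) * 2 ^ (n * n - k * k) :=
          Nat.mul_le_mul_right _ hScard
  have := Nat.le_of_mul_le_mul_right this hpos
  linarith

open Finset

/-- For every sufficiently large `n`, with `k = ⌈3 · log₂ n⌉`, there exists an `n × n`
Boolean matrix with no monochromatic `k × k` minor. -/
theorem exists_matrix_no_monochromatic_minor :
    ∃ N : ℕ, ∀ n : ℕ, N ≤ n →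
      ∃ M : Fin n → Fin n → Bool,
        ¬ ∃ (r c : Fin (⌈3 * Real.logb 2 n⌉₊) → Fin n),
            Function.Injective r ∧ Function.Injective c ∧
            ∃ b : Bool, ∀ i j, M (r i) (c j) = b := by
  refine ⟨144, fun n hn => ?_⟩
  by_contra hcon
  push_neg at hcon
  set k : ℕ := ⌈3 * Real.logb 2 n⌉₊ with hk
  have hn1 : (1:ℝ) ≤ (n:ℝ) := by exact_mod_cast (show (1:ℕ) ≤ n by omega)
  have hnpos : (0:ℝ) < n := by linarith
  have hlog2 : (0.6931471803 : ℝ) < Real.log 2 := Real.log_two_gt_d9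
  have hlogn_nonneg : 0 ≤ Real.log n := Real.log_nonneg hn1
  -- k ≤ n
  have hsqrt : (12:ℝ) ≤ Real.sqrt n := by
    rw [show (12:ℝ) = Real.sqrt 144 by
      rw [show (144:ℝ) = 12^2 by norm_num, Real.sqrt_sq (by norm_num)]]
    exact Real.sqrt_le_sqrt (by exact_mod_cast hn)
  have hsqrtsq : Real.sqrt n * Real.sqrt n = n := Real.mul_self_sqrt (le_of_lt hnpos)
  have hlogle : Real.log n ≤ 2 * (Real.sqrt n - 1) := by
    have h1 : Real.log (Real.sqrt n) ≤ Real.sqrt n - 1 :=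
      Real.log_le_sub_one_of_pos (Real.sqrt_pos.mpr hnpos)
    have h2 : Real.log (Real.sqrt n) = Real.log n / 2 := Real.log_sqrt (le_of_lt hnpos)
    linarith
  have hlogb_le : Real.logb 2 n ≤ 2 * Real.log n := by
    rw [Real.logb, div_le_iff₀ (by linarith)]
    nlinarith
  have h3x_le : 3 * Real.logb 2 n ≤ (n:ℝ) := by
    nlinarith [hsqrtsq, hsqrt, hlogle, hlogb_le]
  have hkn : k ≤ n := Nat.ceil_le.mpr h3x_le
  -- k ≥ 2
  have hlogb_ge1 : (1:ℝ) ≤ Real.logb 2 n := by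
    rw [show (1:ℝ) = Real.logb 2 2 by simp]
    exact Real.logb_le_logb_of_le (by norm_num) (by norm_num) (by exact_mod_cast hn.trans' (by norm_num))
  have hk2 : 2 ≤ k := by
    have h2 : 2 < k := Nat.lt_ceil.mpr (by push_cast; linarith)
    omega
  -- counting bound
  have hcount : 2 ^ (k * k) ≤ 2 * n ^ k * n ^ k :=
    counting_aux hkn (fun M => hcon M)
  -- real side contradiction
  have hcountR : (2:ℝ) ^ (k * k : ℕ) ≤ 2 * (n:ℝ) ^ (k:ℕ) * (n:ℝ) ^ (k:ℕ) := by
    exact_mod_cast hcount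
  have hxk : 3 * Real.logb 2 n ≤ (k:ℝ) := Nat.le_ceil _
  have hnle : (n:ℝ) ≤ (2:ℝ) ^ ((k:ℝ)/3) := by
    calc (n:ℝ) = (2:ℝ) ^ (Real.logb 2 n) := (Real.rpow_logb (by norm_num) (by norm_num) hnpos).symm
      _ ≤ (2:ℝ) ^ ((k:ℝ)/3) := by
          apply Real.rpow_le_rpow_of_exponent_le (by norm_num)
          linarith
  have hpowle : (n:ℝ) ^ (k:ℕ) ≤ (2:ℝ) ^ ((k:ℝ)/3 * k) := by
    calc (n:ℝ) ^ (k:ℕ) ≤ ((2:ℝ) ^ ((k:ℝ)/3)) ^ (k:ℕ) :=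
          pow_le_pow_left₀ (by linarith) hnle k
      _ = (2:ℝ) ^ ((k:ℝ)/3 * k) := by
          rw [← Real.rpow_natCast ((2:ℝ) ^ ((k:ℝ)/3)) k, ← Real.rpow_mul (by norm_num)]
  have hfinal : (2:ℝ) ^ ((k*k : ℕ):ℝ) ≤ (2:ℝ) ^ (1 + 2 * ((k:ℝ)/3 * k)) := by
    have h2 : (0:ℝ) ≤ (2:ℝ) ^ ((k:ℝ)/3 * k) := le_of_lt (Real.rpow_pos_of_pos (by norm_num) _)
    calc (2:ℝ) ^ ((k*k : ℕ):ℝ) = (2:ℝ) ^ (k*k : ℕ) := by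
          rw [Real.rpow_natCast]
      _ ≤ 2 * (n:ℝ) ^ (k:ℕ) * (n:ℝ) ^ (k:ℕ) := hcountR
      _ ≤ 2 * (2:ℝ) ^ ((k:ℝ)/3 * k) * (2:ℝ) ^ ((k:ℝ)/3 * k) := by
          have hn0 : (0:ℝ) ≤ (n:ℝ)^(k:ℕ) := by positivity
          nlinarith [hpowle]
      _ = (2:ℝ) ^ (1 + 2 * ((k:ℝ)/3 * k)) := by
          rw [show (1 + 2*((k:ℝ)/3*k)) = 1 + ((k:ℝ)/3*k + (k:ℝ)/3*k) by ring,
            Real.rpow_add (by norm_num), Real.rpow_add (by norm_num), Real.rpow_one]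
          ring
  have hexp := (Real.rpow_le_rpow_left_iff (by norm_num : (1:ℝ) < 2)).mp hfinal
  have hkR : (2:ℝ) ≤ (k:ℝ) := by exact_mod_cast hk2
  have : ((k*k : ℕ):ℝ) = (k:ℝ) * k := by push_cast; ring
  nlinarith [hexp, hkR]
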